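/- Let q_i, q_{i+1}, a be real numbers and let ε ≥ 0. Consider the expected quantization distortion D(p) = p·(q_i − a)² + (1 − p)·(q_{i+1} − a)² over probabilities p satisfying 0 ≤ p ≤ 1 and the differential-privacy constraint e^{−ε}·(1 − p) ≤ p ≤ e^{ε}·(1 − p). Define p* = e^{ε}/(e^{ε}+1) if |q_i − a| ≤ |q_{i+1} − a| and p* = 1/(e^{ε}+1) otherwise. Then p* is feasible and for every feasible p one has D(p*) ≤ D(p); that is, p* minimizes the expected distortion subject to the ε-DP constraint. -/

import Mathlib

open Real

/-- The probability `p* = e^ε/(e^ε+1)` (if `a` is closer to `q_i`) or `1/(e^ε+1)` (otherwise)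
is feasible for the ε-DP constraint and minimizes the expected quantization distortion
`D(p) = p·(q_i − a)² + (1 − p)·(q_{i+1} − a)²` over all feasible probabilities `p`. -/
theorem optimal_dp_quantization_probability (qi qi1 a ε : ℝ) (hε : 0 ≤ ε) :
    letI D : ℝ → ℝ := fun p => p * (qi - a) ^ 2 + (1 - p) * (qi1 - a) ^ 2
    letI pstar : ℝ :=
      if |qi - a| ≤ |qi1 - a| then Real.exp ε / (Real.exp ε + 1) else 1 / (Real.exp ε + 1)
    (0 ≤ pstar ∧ pstar ≤ 1 ∧
      Real.exp (-ε) * (1 - pstar) ≤ pstar ∧ pstar ≤ Real.exp ε * (1 - pstar)) ∧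
    ∀ p : ℝ, 0 ≤ p → p ≤ 1 →
      Real.exp (-ε) * (1 - p) ≤ p → p ≤ Real.exp ε * (1 - p) →
      D pstar ≤ D p := by
  have hE1 : (1:ℝ) ≤ Real.exp ε := Real.one_le_exp hε
  have hEpos : (0:ℝ) < Real.exp ε := Real.exp_pos ε
  have hden : (0:ℝ) < Real.exp ε + 1 := by linarith
  have hinv : Real.exp (-ε) = (Real.exp ε)⁻¹ := Real.exp_neg ε
  have hEinv : Real.exp (-ε) * Real.exp ε = 1 := by rw [hinv]; field_simp
  have hEneg : (0:ℝ) ≤ Real.exp (-ε) := (Real.exp_pos _).le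
  have h1a : 1 - Real.exp ε / (Real.exp ε + 1) = 1 / (Real.exp ε + 1) := by field_simp; ring
  have h1b : 1 - 1 / (Real.exp ε + 1) = Real.exp ε / (Real.exp ε + 1) := by field_simp; ring
  by_cases h : |qi - a| ≤ |qi1 - a|
  · have hAB : (qi - a) ^ 2 ≤ (qi1 - a) ^ 2 := by
      rw [← sq_abs (qi - a), ← sq_abs (qi1 - a)]
      exact pow_le_pow_left₀ (abs_nonneg _) h 2
    simp only [if_pos h]
    refine ⟨⟨by positivity, ?_, ?_, ?_⟩, ?_⟩
    · rw [div_le_one hden]; linarith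
    · rw [h1a, mul_one_div, div_le_div_iff₀ hden hden]
      nlinarith [Real.exp_le_one_iff.mpr (neg_nonpos.mpr hε)]
    · exact le_of_eq (by rw [h1a]; ring)
    · intro p hp0 hp1 hlo hhi
      have hple : p ≤ Real.exp ε / (Real.exp ε + 1) := by
        rw [le_div_iff₀ hden]; nlinarith
      nlinarith [hple, hAB]
  · have hAB : (qi1 - a) ^ 2 ≤ (qi - a) ^ 2 := by
      rw [← sq_abs (qi - a), ← sq_abs (qi1 - a)]
      exact pow_le_pow_left₀ (abs_nonneg _) (le_of_not_ge h) 2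
    simp only [if_neg h]
    refine ⟨⟨by positivity, ?_, ?_, ?_⟩, ?_⟩
    · rw [div_le_one hden]; linarith
    · rw [h1b, hinv]
      exact le_of_eq (by field_simp)
    · rw [h1b, ← mul_div_assoc, div_le_div_iff₀ hden hden]
      nlinarith
    · intro p hp0 hp1 hlo hhi
      have hpge : 1 / (Real.exp ε + 1) ≤ p := by
        rw [div_le_iff₀ hden]
        nlinarith [mul_le_mul_of_nonneg_left hlo hEpos.le, hEinv]
      nlinarith [hpge, hAB]
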